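/- Let n ∈ ℕ and define (near z = 1) the function W(z) = (μ_v/(1 − μ̄_v θ̄ z))·(μ_v θ̄ z/(1 − μ̄_v θ̄ z))ⁿ·(1 − θμ_b/D(z)) + (θμ_b/D(z))·(μ_b z/(1 − μ̄_b z))ⁿ·(μ_v + μ̄_v μ_b z/(1 − μ̄_b z)) + μ_v θ̄ z/(1 − μ̄_v θ̄ z) + (θ/(1 − μ̄_v θ̄ z))·(μ_b z/(1 − μ̄_b z)), where D(z) = μ_b(1 − μ̄_v θ̄ z) − μ_v θ̄(1 − μ̄_b z). Then W is differentiable at z = 1 and W'(1) = (n+1)/μ_b − 1 + ((μ_b − μ_v)/(θμ_b))·[1 − ((μ_v − μ_v θ)/(θ + μ_v − θμ_v))^{n+1}] + (θ + μ_b − θμ_b)/(μ_b(θ + μ_v − θμ_v)). -/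

import Mathlib

lemma pow_hasDerivAt' {c : ℝ → ℝ} {c' x : ℝ} (hc : HasDerivAt c c' x) (hx : c x ≠ 0) (n : ℕ) :
    HasDerivAt (fun y => c y ^ n) ((n : ℝ) * c x ^ n * c' / c x) x := by
  refine HasDerivAt.congr_deriv (hc.pow n) ?_
  rcases n with _ | m
  · simp
  · rw [Nat.add_sub_cancel]
    push_cast
    field_simp
    ring


lemma pow_hasDerivAt2 {c : ℝ → ℝ} {c' x B d : ℝ} (n : ℕ) (hc : HasDerivAt c c' x)
    (hB : c x = B) (hBne : B ≠ 0) (hd : d * B = (n : ℝ) * B ^ n * c') :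
    HasDerivAt (fun y => c y ^ n) d x := by
  have h := hc.pow n
  rw [hB] at h
  refine HasDerivAt.congr_deriv h ?_
  rcases n with _ | m
  · have h0 : d * B = 0 := by simpa using hd
    have : d = 0 := by
      rcases mul_eq_zero.1 h0 with h' | h'
      · exact h'
      · exact absurd h' hBne
    simp [this]
  · rw [Nat.add_sub_cancel]
    have key : d * B = (↑(m + 1) * B ^ m * c') * B := by rw [hd]; ring
    exact (mul_right_cancel₀ hBne key).symm

set_option maxHeartbeats 2000000 in
/-- The closed-form PGF W(z) of the sojourn time of a customer joining the observable system
in state (n,0) is differentiable at z = 1 with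
W'(1) = (n+1)/μ_b − 1 + ((μ_b−μ_v)/(θμ_b))[1 − ((μ_v−μ_vθ)/(θ+μ_v−θμ_v))^{n+1}]
        + (θ+μ_b−θμ_b)/(μ_b(θ+μ_v−θμ_v)). -/
theorem stmt_13
    (μb μv θ : ℝ)
    (hμb : μb ∈ Set.Ioo (0:ℝ) 1) (hμv : μv ∈ Set.Ioo (0:ℝ) 1) (hθ : θ ∈ Set.Ioo (0:ℝ) 1)
    (n : ℕ) :
    HasDerivAt (fun z : ℝ =>
        μv / (1 - (1 - μv) * (1 - θ) * z) *
          (μv * (1 - θ) * z / (1 - (1 - μv) * (1 - θ) * z)) ^ n *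
          (1 - θ * μb /
            (μb * (1 - (1 - μv) * (1 - θ) * z) - μv * (1 - θ) * (1 - (1 - μb) * z))) +
        θ * μb / (μb * (1 - (1 - μv) * (1 - θ) * z) - μv * (1 - θ) * (1 - (1 - μb) * z)) *
          (μb * z / (1 - (1 - μb) * z)) ^ n *
          (μv + (1 - μv) * μb * z / (1 - (1 - μb) * z)) +
        μv * (1 - θ) * z / (1 - (1 - μv) * (1 - θ) * z) +
        θ / (1 - (1 - μv) * (1 - θ) * z) * (μb * z / (1 - (1 - μb) * z)))
      (((n : ℝ) + 1) / μb - 1 +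
        (μb - μv) / (θ * μb) *
          (1 - ((μv - μv * θ) / (θ + μv - θ * μv)) ^ (n + 1)) +
        (θ + μb - θ * μb) / (μb * (θ + μv - θ * μv))) 1 := by
  obtain ⟨hb0, hb1⟩ := hμb
  obtain ⟨hv0, hv1⟩ := hμv
  obtain ⟨ht0, ht1⟩ := hθ
  -- nonvanishing facts
  have hne1 : (1 : ℝ) - (1 - μv) * (1 - θ) * 1 ≠ 0 := by nlinarith
  have hne2 : (1 : ℝ) - (1 - μb) * 1 ≠ 0 := by nlinarith
  have hneD : μb * (1 - (1 - μv) * (1 - θ) * 1) - μv * (1 - θ) * (1 - (1 - μb) * 1) ≠ 0 := by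
    nlinarith
  -- basic derivatives
  have h1 : HasDerivAt (fun z : ℝ => 1 - (1 - μv) * (1 - θ) * z)
      (-((1 - μv) * (1 - θ) * 1)) 1 :=
    ((hasDerivAt_id (1:ℝ)).const_mul ((1 - μv) * (1 - θ))).const_sub 1
  have h2 : HasDerivAt (fun z : ℝ => 1 - (1 - μb) * z) (-((1 - μb) * 1)) 1 :=
    ((hasDerivAt_id (1:ℝ)).const_mul (1 - μb)).const_sub 1
  have hD : HasDerivAt
      (fun z : ℝ => μb * (1 - (1 - μv) * (1 - θ) * z) - μv * (1 - θ) * (1 - (1 - μb) * z))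
      (μb * -((1 - μv) * (1 - θ) * 1) - μv * (1 - θ) * -((1 - μb) * 1)) 1 :=
    (h1.const_mul μb).sub (h2.const_mul (μv * (1 - θ)))
  have base1 : HasDerivAt (fun z : ℝ => μv * (1 - θ) * z / (1 - (1 - μv) * (1 - θ) * z))
      ((μv * (1 - θ) * 1 * (1 - (1 - μv) * (1 - θ) * 1) -
        μv * (1 - θ) * 1 * -((1 - μv) * (1 - θ) * 1)) / (1 - (1 - μv) * (1 - θ) * 1) ^ 2) 1 :=
    ((hasDerivAt_id (1:ℝ)).const_mul (μv * (1 - θ))).div h1 hne1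
  have base2 : HasDerivAt (fun z : ℝ => μb * z / (1 - (1 - μb) * z))
      ((μb * 1 * (1 - (1 - μb) * 1) - μb * 1 * -((1 - μb) * 1)) / (1 - (1 - μb) * 1) ^ 2) 1 :=
    ((hasDerivAt_id (1:ℝ)).const_mul μb).div h2 hne2
  have hbase1ne : μv * (1 - θ) * 1 / (1 - (1 - μv) * (1 - θ) * 1) ≠ 0 := by
    apply div_ne_zero
    · nlinarith
    · exact hne1
  have hbase2ne : μb * 1 / (1 - (1 - μb) * 1) ≠ 0 := by
    apply div_ne_zero
    · nlinarith
    · exact hne2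
  have hA : (θ + μv - θ * μv : ℝ) ≠ 0 := by nlinarith
  have hb' : μb ≠ 0 := ne_of_gt hb0
  have hμvd1 := (hasDerivAt_const (1 : ℝ) μv).div h1 hne1
  have hBne : (μv * (1 - θ) / (θ + μv - θ * μv) : ℝ) ≠ 0 := by
    apply div_ne_zero _ hA
    nlinarith
  have hpow1 : HasDerivAt (fun z : ℝ => (μv * (1 - θ) * z / (1 - (1 - μv) * (1 - θ) * z)) ^ n)
      ((n : ℝ) * (μv * (1 - θ) / (θ + μv - θ * μv)) ^ n / (θ + μv - θ * μv)) 1 := by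
    refine pow_hasDerivAt2 n base1 ?_ hBne ?_
    · rw [mul_one, show (1 - (1 - μv) * (1 - θ) * 1 : ℝ) = θ + μv - θ * μv from by ring]
    · generalize (μv * (1 - θ) / (θ + μv - θ * μv) : ℝ) ^ n = P
      rw [show (1 - (1 - μv) * (1 - θ) * 1 : ℝ) = θ + μv - θ * μv from by ring]
      field_simp
      ring
  have hfrac := ((hasDerivAt_const (1 : ℝ) (θ * μb)).div hD hneD).const_sub 1
  have hfrac2 := (hasDerivAt_const (1 : ℝ) (θ * μb)).div hD hneD
  have hpow2 : HasDerivAt (fun z : ℝ => (μb * z / (1 - (1 - μb) * z)) ^ n) ((n : ℝ) / μb) 1 := by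
    refine pow_hasDerivAt2 n base2 ?_ one_ne_zero ?_
    · rw [mul_one, show (1 - (1 - μb) * 1 : ℝ) = μb from by ring, div_self hb']
    · rw [one_pow, show (1 - (1 - μb) * 1 : ℝ) = μb from by ring]
      field_simp
      ring
  have hlast := (((hasDerivAt_id (1:ℝ)).const_mul ((1 - μv) * μb)).div h2 hne2).const_add μv
  have hθd1 := (hasDerivAt_const (1 : ℝ) θ).div h1 hne1
  have H := ((((hμvd1.mul hpow1).mul hfrac).add ((hfrac2.mul hpow2).mul hlast)).add
      base1).add (hθd1.mul base2)
  refine HasDerivAt.congr_deriv H ?_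
  symm
  simp only [Pi.div_apply, Pi.mul_apply]
  have e2 : (1:ℝ) - (1 - μb) * 1 = μb := by ring
  have e1 : (1:ℝ) - (1 - μv) * (1 - θ) * 1 = θ + μv - θ * μv := by ring
  rw [e1, e2] at *
  have e3 : μb * (θ + μv - θ * μv) - μv * (1 - θ) * μb = θ * μb := by ring
  rw [e3] at *
  rw [show (μb * 1 / μb : ℝ) = 1 from by field_simp]
  simp only [one_pow, id_eq, mul_one]
  rw [show (μv - μv * θ : ℝ) = μv * (1 - θ) from by ring, pow_succ]
  generalize (μv * (1 - θ) / (θ + μv - θ * μv) : ℝ) ^ n = P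
  have hθ0 : θ ≠ 0 := ne_of_gt ht0
  obtain ⟨A, hAdef⟩ : ∃ A, A = θ + μv - θ * μv := ⟨_, rfl⟩
  rw [← hAdef] at hA ⊢
  field_simp
  rw [hAdef]
  ring
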